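/- Let f : ℝⁿ → ℝ be continuously differentiable and g : ℝⁿ → ℝ be continuous, differentiable in the first coordinate except on finitely many hyperplanes {x₁ = c_j}, with integrable partial derivatives. Then for fixed x₂,…,xₙ, lim_{a→∞, b→−∞}[f(a,x₂,…)g(a,x₂,…) − f(b,x₂,…)g(b,x₂,…)] = ∫_ℝ f ∂g/∂x₁ dx₁ + ∫_ℝ g ∂f/∂x₁ dx₁. -/

import Mathlib

open MeasureTheory Filter

open Set in
theorem ftc_finset_aux (C : Finset ℝ) : ∀ (h h' : ℝ → ℝ) (a b : ℝ), a ≤ b →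
    ContinuousOn h (Set.Icc a b) →
    (∀ t ∈ Set.Ioo a b, t ∉ C → HasDerivAt h (h' t) t) →
    IntegrableOn h' (Set.Icc a b) →
    ∫ y in a..b, h' y = h b - h a := by
  induction C using Finset.induction_on with
  | empty =>
    intro h h' a b hab hc hd hi
    exact intervalIntegral.integral_eq_sub_of_hasDeriv_right_of_le hab hc
      (fun t ht => (hd t ht (by simp)).hasDerivWithinAt)
      ((intervalIntegrable_iff_integrableOn_Icc_of_le hab).2 hi)
  | @insert c s hcs ih =>
    intro h h' a b hab hcont hd hi
    by_cases hmem : c ∈ Set.Ioo a b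
    · have h1 : ∫ y in a..c, h' y = h c - h a := by
        refine ih h h' a c hmem.1.le (hcont.mono (Icc_subset_Icc le_rfl hmem.2.le))
          (fun t ht hts => hd t ⟨ht.1, ht.2.trans hmem.2⟩ ?_)
          (hi.mono_set (Icc_subset_Icc le_rfl hmem.2.le))
        simp only [Finset.mem_insert, not_or]
        exact ⟨ne_of_lt ht.2, hts⟩
      have h2 : ∫ y in c..b, h' y = h b - h c := by
        refine ih h h' c b hmem.2.le (hcont.mono (Icc_subset_Icc hmem.1.le le_rfl))
          (fun t ht hts => hd t ⟨hmem.1.trans ht.1, ht.2⟩ ?_)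
          (hi.mono_set (Icc_subset_Icc hmem.1.le le_rfl))
        simp only [Finset.mem_insert, not_or]
        exact ⟨ne_of_gt ht.1, hts⟩
      have hadd := intervalIntegral.integral_add_adjacent_intervals
        (a := a) (b := c) (c := b) (f := h') (μ := volume)
        ((intervalIntegrable_iff_integrableOn_Icc_of_le hmem.1.le).2
          (hi.mono_set (Icc_subset_Icc le_rfl hmem.2.le)))
        ((intervalIntegrable_iff_integrableOn_Icc_of_le hmem.2.le).2
          (hi.mono_set (Icc_subset_Icc hmem.1.le le_rfl)))
      rw [← hadd, h1, h2]; ring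
    · refine ih h h' a b hab hcont (fun t ht hts => hd t ht ?_) hi
      simp only [Finset.mem_insert, not_or]
      exact ⟨fun hrfl => hmem (hrfl ▸ ht), hts⟩

/-- Integration by parts on the first coordinate for an a.e.-differentiable factor:
if `f : ℝⁿ → ℝ` is `C¹`, `g : ℝⁿ → ℝ` is continuous and differentiable in the first
coordinate except on finitely many hyperplanes `{x₁ = c}`, with integrable partial
derivatives, then for fixed `x₂,…,xₙ`,
`lim_{a→∞, b→−∞} [f g (a,…) − f g (b,…)] = ∫ f ∂₁g + ∫ g ∂₁f`. -/
theorem ae_differentiable_integration_by_parts (n : ℕ) (f g : (Fin (n + 1) → ℝ) → ℝ)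
    (hf : ContDiff ℝ 1 f) (hg : Continuous g) (x : Fin (n + 1) → ℝ) (C : Finset ℝ)
    (hgd : ∀ t ∉ C, DifferentiableAt ℝ (fun s => g (Function.update x 0 s)) t)
    (hint1 : Integrable fun t =>
      f (Function.update x 0 t) * deriv (fun s => g (Function.update x 0 s)) t)
    (hint2 : Integrable fun t =>
      g (Function.update x 0 t) * deriv (fun s => f (Function.update x 0 s)) t) :
    Tendsto
      (fun ab : ℝ × ℝ =>
        f (Function.update x 0 ab.1) * g (Function.update x 0 ab.1) -
          f (Function.update x 0 ab.2) * g (Function.update x 0 ab.2))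
      (atTop ×ˢ atBot)
      (nhds
        ((∫ t, f (Function.update x 0 t) * deriv (fun s => g (Function.update x 0 s)) t) +
          ∫ t, g (Function.update x 0 t) * deriv (fun s => f (Function.update x 0 s)) t)) := by
  set u : ℝ → (Fin (n + 1) → ℝ) := fun s => Function.update x 0 s with hu
  have hu' : ∀ s, HasDerivAt u (Pi.single 0 1) s := by
    intro s
    have : u = fun s => Function.update x 0 0 + s • (Pi.single 0 1 : Fin (n+1) → ℝ) := by
      funext s
      funext i
      by_cases hi : i = 0 <;> simp [hu, hi, Function.update_apply]
    rw [this]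
    simpa using ((hasDerivAt_id s).smul_const (Pi.single 0 1 : Fin (n+1) → ℝ)).const_add
      (Function.update x 0 0)
  have hucont : Continuous u := continuous_iff_continuousAt.2 fun s => (hu' s).continuousAt
  set F : ℝ → ℝ := fun t => f (u t) with hF
  set G : ℝ → ℝ := fun t => g (u t) with hG
  have hFd : ∀ t, DifferentiableAt ℝ F t := fun t =>
    ((hf.differentiable one_ne_zero).differentiableAt.comp t (hu' t).differentiableAt)
  have hGc : Continuous G := hg.comp hucont
  have hFc : Continuous F := (hf.continuous).comp hucont
  set h : ℝ → ℝ := fun t => F t * G t with hh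
  set h' : ℝ → ℝ := fun t => F t * deriv G t + G t * deriv F t with hh'
  have hd : ∀ t ∉ C, HasDerivAt h (h' t) t := by
    intro t ht
    have h1 := (hFd t).hasDerivAt
    have h2 := (hgd t ht).hasDerivAt
    have := h1.mul h2
    convert this using 1
    · rfl
    · rfl
    · rfl
    simp only [hh', hF, hG]
    ring
  have hint : Integrable h' := by
    have := hint1.add hint2
    exact this
  have key : ∀ a b : ℝ, b ≤ a → h a - h b = ∫ y in b..a, h' y := by
    intro a b hba
    rw [ftc_finset_aux C h h' b a hba ((hFc.mul hGc).continuousOn)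
      (fun t _ ht => hd t ht) hint.integrableOn]
  have heq : (fun ab : ℝ × ℝ => h ab.1 - h ab.2) =ᶠ[atTop ×ˢ atBot]
      fun ab : ℝ × ℝ => ∫ y in ab.2..ab.1, h' y := by
    filter_upwards [prod_mem_prod (eventually_ge_atTop (0:ℝ)) (eventually_le_atBot (0:ℝ))]
      with ab hab
    exact key ab.1 ab.2 (hab.2.trans hab.1)
  have hT : Tendsto (fun ab : ℝ × ℝ => ∫ y in ab.2..ab.1, h' y) (atTop ×ˢ atBot)
      (nhds (∫ y, h' y)) :=
    intervalIntegral_tendsto_integral hint tendsto_snd tendsto_fst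
  have hsum : ∫ y, h' y =
      (∫ t, f (Function.update x 0 t) * deriv (fun s => g (Function.update x 0 s)) t) +
        ∫ t, g (Function.update x 0 t) * deriv (fun s => f (Function.update x 0 s)) t :=
    integral_add hint1 hint2
  rw [← hsum]
  exact (Tendsto.congr' heq.symm hT)
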